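/- Suppose (H,V) and (Y,U) are matrix solutions of the Jacobi system with Y(0) = 0, U(0) = I, H(−1) = 0, det H(t) ≠ 0 for t > −1 and det Y(t) ≠ 0 for t > 0, both with Lagrangian images, and with Wronskian Y*V − U*H ≡ −I. Then for all t > 0: [∫₀^t H^{-1} B (H*)^{-1} ds] · [D − ∫₁^t Y^{-1} B (Y*)^{-1} ds] = I, where D = Y(1)^{-1} H(1); in particular the increasing family of symmetric matrices ∫₁^t Y^{-1} B (Y*)^{-1} ds is bounded above by D and converges as t → +∞. -/

import Mathlib

open Matrix Filter Topology
open MeasureTheory intervalIntegral Set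

attribute [local instance] Matrix.linftyOpNormedRing Matrix.linftyOpNormedAlgebra

namespace JacobiAux

variable {n : ℕ}

noncomputable def eMat (n : ℕ) : Matrix (Fin n) (Fin n) ℝ ≃L[ℝ] (Fin n → Fin n → ℝ) :=
  LinearEquiv.toContinuousLinearEquiv
    { toFun := fun M => M
      invFun := fun f => Matrix.of f
      map_add' := fun _ _ => rfl
      map_smul' := fun _ _ => rfl
      left_inv := fun _ => rfl
      right_inv := fun _ => rfl }

theorem hasDerivAt_matrix {M : ℝ → Matrix (Fin n) (Fin n) ℝ}
    {M' : Matrix (Fin n) (Fin n) ℝ} {t : ℝ} :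
    HasDerivAt M M' t ↔ ∀ i j, HasDerivAt (fun s => M s i j) (M' i j) t := by
  constructor
  · intro h i j
    have h1 : HasDerivAt (fun s => eMat n (M s)) (eMat n M') t :=
      ((eMat n).toContinuousLinearMap.hasFDerivAt).comp_hasDerivAt t h
    exact hasDerivAt_pi.1 (hasDerivAt_pi.1 h1 i) j
  · intro h
    have h1 : HasDerivAt (fun s => (eMat n) (M s)) ((eMat n) M') t :=
      hasDerivAt_pi.2 fun i => hasDerivAt_pi.2 fun j => h i j
    have h2 := ((eMat n).symm.toContinuousLinearMap.hasFDerivAt).comp_hasDerivAt t h1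
    exact h2

theorem hasDerivAt_inv_matrix {M : ℝ → Matrix (Fin n) (Fin n) ℝ}
    {M' : Matrix (Fin n) (Fin n) ℝ} {t : ℝ} (h : HasDerivAt M M' t)
    (hdet : (M t).det ≠ 0) :
    HasDerivAt (fun s => (M s)⁻¹) (-((M t)⁻¹ * M' * (M t)⁻¹)) t := by
  obtain ⟨u, hu⟩ := (Matrix.isUnit_iff_isUnit_det _).2 hdet.isUnit
  have hF : HasFDerivAt Ring.inverse
      (-(ContinuousLinearMap.mulLeftRight ℝ _ (↑u⁻¹) (↑u⁻¹))) (M t) :=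
    hu ▸ hasFDerivAt_ringInverse u
  have h2 := hF.comp_hasDerivAt t h
  have h3 : HasDerivAt (fun s => Ring.inverse (M s)) (-((M t)⁻¹ * M' * (M t)⁻¹)) t := by
    convert (show HasDerivAt (fun s => Ring.inverse (M s)) _ t from h2) using 1
    have : ((u⁻¹ : (Matrix (Fin n) (Fin n) ℝ)ˣ) : Matrix (Fin n) (Fin n) ℝ) = (M t)⁻¹ := by
      rw [Matrix.coe_units_inv, hu]
    simp [ContinuousLinearMap.mulLeftRight_apply, this, Matrix.mul_assoc]
  have : (fun s => (M s)⁻¹) = fun s => Ring.inverse (M s) :=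
    funext fun s => Matrix.nonsing_inv_eq_ringInverse _
  rw [this]
  exact h3



theorem star_vec (x : Fin n → ℝ) : star x = x := funext fun _ => rfl

theorem posdef_conj {N Bm : Matrix (Fin n) (Fin n) ℝ} (hB : Bm.PosDef)
    (hN : N.det ≠ 0) : (N⁻¹ * Bm * (Nᵀ)⁻¹).PosDef := by
  have hBs : Bmᵀ = Bm := by
    rw [← Matrix.conjTranspose_eq_transpose_of_trivial]; exact hB.1
  rw [Matrix.posDef_iff_dotProduct_mulVec]
  constructor
  · rw [Matrix.IsHermitian, Matrix.conjTranspose_eq_transpose_of_trivial]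
    rw [← Matrix.transpose_nonsing_inv]
    simp [Matrix.transpose_mul, Matrix.transpose_transpose, hBs, Matrix.mul_assoc]
  · intro x hx
    have hdt : ((N⁻¹)ᵀ).det ≠ 0 := by
      rw [Matrix.det_transpose, Matrix.det_nonsing_inv]
      simpa [Ring.inverse_eq_inv'] using inv_ne_zero hN
    have hy : ((N⁻¹)ᵀ *ᵥ x) ≠ 0 := by
      intro h0
      apply hx
      have := congrArg (fun v => ((N⁻¹)ᵀ)⁻¹ *ᵥ v) h0
      simpa [Matrix.mulVec_mulVec, Matrix.nonsing_inv_mul _ hdt.isUnit, Matrix.mulVec_zero] using this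
    have key : dotProduct (star x) ((N⁻¹ * Bm * (Nᵀ)⁻¹) *ᵥ x)
        = dotProduct (star ((N⁻¹)ᵀ *ᵥ x)) (Bm *ᵥ ((N⁻¹)ᵀ *ᵥ x)) := by
      rw [star_vec, star_vec, ← Matrix.transpose_nonsing_inv,
        ← Matrix.mulVec_mulVec, ← Matrix.mulVec_mulVec,
        Matrix.dotProduct_mulVec, Matrix.mulVec_transpose]
    rw [key]
    exact hB.dotProduct_mulVec_pos hy

theorem posdef_integral {a b c : ℝ} {F : ℝ → Matrix (Fin n) (Fin n) ℝ} (hab : a < b)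
    (hca : c < a)
    (hFc : ∀ i j, ContinuousOn (fun s => F s i j) (Set.Ioi c))
    (hsymm : ∀ s, (F s)ᵀ = F s)
    (hpos : ∀ s, c < s → (F s).PosDef) :
    (Matrix.of fun i j => ∫ s in a..b, F s i j).PosDef := by
  have hsub : Set.uIcc a b ⊆ Set.Ioi c := by
    rw [Set.uIcc_of_le hab.le]
    exact fun x hx => lt_of_lt_of_le hca hx.1
  have hint : ∀ i j, IntervalIntegrable (fun s => F s i j) volume a b := fun i j =>
    ((hFc i j).mono hsub).intervalIntegrable
  rw [Matrix.posDef_iff_dotProduct_mulVec]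
  constructor
  · rw [Matrix.IsHermitian, Matrix.conjTranspose_eq_transpose_of_trivial]
    ext i j
    simp only [Matrix.transpose_apply, Matrix.of_apply]
    apply intervalIntegral.integral_congr
    intro s _
    show F s j i = F s i j
    conv_lhs => rw [← hsymm s]
    rw [Matrix.transpose_apply]
  · intro x hx
    have hqint : IntervalIntegrable (fun s => ∑ i, x i * ∑ j, F s i j * x j) volume a b := by
      apply ContinuousOn.intervalIntegrable
      apply continuousOn_finset_sum
      intro i _
      exact (continuousOn_const.mul (continuousOn_finset_sum _ fun j _ =>
        ((hFc i j).mono hsub).mul continuousOn_const))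
    have key : dotProduct (star x) ((Matrix.of fun i j => ∫ s in a..b, F s i j) *ᵥ x)
        = ∫ s in a..b, ∑ i, x i * ∑ j, F s i j * x j := by
      rw [star_vec]
      simp only [dotProduct, Matrix.mulVec, Matrix.of_apply]
      rw [intervalIntegral.integral_finset_sum (f := fun i s => x i * ∑ j, F s i j * x j) (fun i (_ : i ∈ Finset.univ) =>
        (continuousOn_const.mul (continuousOn_finset_sum Finset.univ fun j _ =>
          ((hFc i j).mono hsub).mul continuousOn_const)).intervalIntegrable)]
      apply Finset.sum_congr rfl
      intro i _
      rw [intervalIntegral.integral_const_mul]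
      congr 1
      rw [intervalIntegral.integral_finset_sum (fun j (_ : j ∈ Finset.univ) =>
        ((hint i j).mul_const (x j)))]
      apply Finset.sum_congr rfl
      intro j _
      rw [intervalIntegral.integral_mul_const]
    rw [key]
    apply intervalIntegral_pos_of_pos_on hqint ?_ hab
    intro s hs
    have h := (hpos s (hca.trans hs.1)).dotProduct_mulVec_pos hx
    rw [star_vec] at h
    simpa [dotProduct, Matrix.mulVec] using h
end JacobiAux

theorem jacobi_green_bundle_identity
    (n : ℕ) (A B C : ℝ → Matrix (Fin n) (Fin n) ℝ)
    (hBcont : ∀ i j, Continuous fun t => B t i j)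
    (hBpos : ∀ t, (B t).PosDef) (hCsymm : ∀ t, (C t)ᵀ = C t)
    (H V Y U : ℝ → Matrix (Fin n) (Fin n) ℝ)
    (hH : ∀ t, ∀ i j, HasDerivAt (fun s => H s i j)
      ((A t * H t + B t * V t) i j) t)
    (hV : ∀ t, ∀ i j, HasDerivAt (fun s => V s i j)
      ((-(C t * H t) - (A t)ᵀ * V t) i j) t)
    (hY : ∀ t, ∀ i j, HasDerivAt (fun s => Y s i j)
      ((A t * Y t + B t * U t) i j) t)
    (hU : ∀ t, ∀ i j, HasDerivAt (fun s => U s i j)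
      ((-(C t * Y t) - (A t)ᵀ * U t) i j) t)
    (hY0 : Y 0 = 0) (hU0 : U 0 = 1) (hHm1 : H (-1) = 0)
    (hdetH : ∀ t > (-1 : ℝ), (H t).det ≠ 0)
    (hdetY : ∀ t > (0 : ℝ), (Y t).det ≠ 0)
    (hLagH : ∀ t, ((H t)ᵀ * V t)ᵀ = (H t)ᵀ * V t)
    (hLagY : ∀ t, ((Y t)ᵀ * U t)ᵀ = (Y t)ᵀ * U t)
    (hWr : ∀ t, (Y t)ᵀ * V t - (U t)ᵀ * H t = -1) :
    (∀ t > (0 : ℝ),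
      (Matrix.of fun i j =>
          ∫ s in (0:ℝ)..t, ((H s)⁻¹ * B s * ((H s)ᵀ)⁻¹) i j) *
        ((Y 1)⁻¹ * H 1 -
          Matrix.of fun i j =>
            ∫ s in (1:ℝ)..t, ((Y s)⁻¹ * B s * ((Y s)ᵀ)⁻¹) i j) = 1) ∧
    (∀ s t : ℝ, 0 < s → s < t →
      ((Matrix.of fun i j => ∫ r in (1:ℝ)..t, ((Y r)⁻¹ * B r * ((Y r)ᵀ)⁻¹) i j) -
        Matrix.of fun i j =>
          ∫ r in (1:ℝ)..s, ((Y r)⁻¹ * B r * ((Y r)ᵀ)⁻¹) i j).PosDef) ∧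
    (∀ t > (0 : ℝ),
      ((Y 1)⁻¹ * H 1 -
        Matrix.of fun i j =>
          ∫ s in (1:ℝ)..t, ((Y s)⁻¹ * B s * ((Y s)ᵀ)⁻¹) i j).PosDef) ∧
    (∃ L : Matrix (Fin n) (Fin n) ℝ, ∀ i j,
      Tendsto (fun t => ∫ s in (1:ℝ)..t, ((Y s)⁻¹ * B s * ((Y s)ᵀ)⁻¹) i j)
        atTop (𝓝 (L i j))) := by
  classical
  have hH' : ∀ t, HasDerivAt H (A t * H t + B t * V t) t :=
    fun t => JacobiAux.hasDerivAt_matrix.2 (hH t)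
  have hY' : ∀ t, HasDerivAt Y (A t * Y t + B t * U t) t :=
    fun t => JacobiAux.hasDerivAt_matrix.2 (hY t)
  have hBsymm : ∀ s, (B s)ᵀ = B s := fun s => by
    rw [← Matrix.conjTranspose_eq_transpose_of_trivial]; exact (hBpos s).1
  have hWrT : ∀ t, (V t)ᵀ * Y t - (H t)ᵀ * U t = -1 := by
    intro t
    have h := congrArg Matrix.transpose (hWr t)
    simpa [Matrix.transpose_sub, Matrix.transpose_mul, Matrix.transpose_transpose] using h
  have hHt_inv : ∀ s, -1 < s → ((H s)ᵀ)⁻¹ = U s - V s * ((H s)⁻¹ * Y s) := by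
    intro s hs
    apply Matrix.inv_eq_right_inv
    have hsymm : (H s)ᵀ * V s = (V s)ᵀ * H s := by
      conv_lhs => rw [← hLagH s]
      rw [Matrix.transpose_mul, Matrix.transpose_transpose]
    have hc : H s * ((H s)⁻¹ * Y s) = Y s := by
      rw [← Matrix.mul_assoc, Matrix.mul_nonsing_inv _ (hdetH s hs).isUnit, Matrix.one_mul]
    rw [Matrix.mul_sub, ← Matrix.mul_assoc, hsymm, Matrix.mul_assoc, hc]
    rw [← neg_sub, hWrT s, neg_neg]
  have hYt_inv : ∀ s, 0 < s → ((Y s)ᵀ)⁻¹ = U s * ((Y s)⁻¹ * H s) - V s := by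
    intro s hs
    apply Matrix.inv_eq_right_inv
    have hsymm : (Y s)ᵀ * U s = (U s)ᵀ * Y s := by
      conv_lhs => rw [← hLagY s]
      rw [Matrix.transpose_mul, Matrix.transpose_transpose]
    have hc : Y s * ((Y s)⁻¹ * H s) = H s := by
      rw [← Matrix.mul_assoc, Matrix.mul_nonsing_inv _ (hdetY s hs).isUnit, Matrix.one_mul]
    rw [Matrix.mul_sub, ← Matrix.mul_assoc, hsymm, Matrix.mul_assoc, hc]
    rw [← neg_sub, hWr s, neg_neg]
  -- derivative of H⁻¹ * Y
  have hGH : ∀ s, -1 < s → HasDerivAt (fun r => (H r)⁻¹ * Y r)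
      ((H s)⁻¹ * B s * ((H s)ᵀ)⁻¹) s := by
    intro s hs
    have hInv := JacobiAux.hasDerivAt_inv_matrix (hH' s) (hdetH s hs)
    have hmul := hInv.mul (hY' s)
    convert (show HasDerivAt (fun r => (H r)⁻¹ * Y r) _ s from hmul) using 1
    rw [hHt_inv s hs]
    have hc : H s * ((H s)⁻¹ * Y s) = Y s := by
      rw [← Matrix.mul_assoc, Matrix.mul_nonsing_inv _ (hdetH s hs).isUnit, Matrix.one_mul]
    simp only [Matrix.mul_add, Matrix.add_mul, Matrix.mul_sub, Matrix.sub_mul,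
      Matrix.neg_mul, neg_add, Matrix.mul_assoc]
    rw [hc]
    abel
  -- derivative of Y⁻¹ * H
  have hYH : ∀ s, 0 < s → HasDerivAt (fun r => (Y r)⁻¹ * H r)
      (-((Y s)⁻¹ * B s * ((Y s)ᵀ)⁻¹)) s := by
    intro s hs
    have hInv := JacobiAux.hasDerivAt_inv_matrix (hY' s) (hdetY s hs)
    have hmul := hInv.mul (hH' s)
    convert (show HasDerivAt (fun r => (Y r)⁻¹ * H r) _ s from hmul) using 1
    rw [hYt_inv s hs]
    have hc : Y s * ((Y s)⁻¹ * H s) = H s := by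
      rw [← Matrix.mul_assoc, Matrix.mul_nonsing_inv _ (hdetY s hs).isUnit, Matrix.one_mul]
    simp only [Matrix.mul_add, Matrix.add_mul, Matrix.mul_sub, Matrix.sub_mul,
      Matrix.neg_mul, neg_add, neg_sub, Matrix.mul_assoc]
    rw [hc]
    abel
  -- entrywise continuity of inverses
  have hHinvC : ∀ (i j : Fin n), ContinuousOn (fun s => (H s)⁻¹ i j) (Set.Ioi (-1:ℝ)) := by
    intro i j s hs
    exact ((JacobiAux.hasDerivAt_matrix.1
      (JacobiAux.hasDerivAt_inv_matrix (hH' s) (hdetH s hs)) i j).continuousAt).continuousWithinAt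
  have hYinvC : ∀ (i j : Fin n), ContinuousOn (fun s => (Y s)⁻¹ i j) (Set.Ioi (0:ℝ)) := by
    intro i j s hs
    exact ((JacobiAux.hasDerivAt_matrix.1
      (JacobiAux.hasDerivAt_inv_matrix (hY' s) (hdetY s hs)) i j).continuousAt).continuousWithinAt
  -- entrywise continuity of the integrands
  have hFc : ∀ i j, ContinuousOn (fun s => ((H s)⁻¹ * B s * ((H s)ᵀ)⁻¹) i j)
      (Set.Ioi (-1:ℝ)) := by
    intro i j
    have hrw : ∀ s : ℝ, ((H s)⁻¹ * B s * ((H s)ᵀ)⁻¹) i j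
        = ∑ l, (∑ k, (H s)⁻¹ i k * B s k l) * (H s)⁻¹ j l := by
      intro s
      rw [← Matrix.transpose_nonsing_inv]
      simp [Matrix.mul_apply, Matrix.transpose_apply]
    refine ContinuousOn.congr ?_ fun s _ => hrw s
    apply continuousOn_finset_sum
    intro l _
    exact (continuousOn_finset_sum _ fun k _ =>
      (hHinvC i k).mul ((hBcont k l).continuousOn)).mul (hHinvC j l)
  have hGc : ∀ i j, ContinuousOn (fun s => ((Y s)⁻¹ * B s * ((Y s)ᵀ)⁻¹) i j)
      (Set.Ioi (0:ℝ)) := by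
    intro i j
    have hrw : ∀ s : ℝ, ((Y s)⁻¹ * B s * ((Y s)ᵀ)⁻¹) i j
        = ∑ l, (∑ k, (Y s)⁻¹ i k * B s k l) * (Y s)⁻¹ j l := by
      intro s
      rw [← Matrix.transpose_nonsing_inv]
      simp [Matrix.mul_apply, Matrix.transpose_apply]
    refine ContinuousOn.congr ?_ fun s _ => hrw s
    apply continuousOn_finset_sum
    intro l _
    exact (continuousOn_finset_sum _ fun k _ =>
      (hYinvC i k).mul ((hBcont k l).continuousOn)).mul (hYinvC j l)
  have memIoi : ∀ {c a b x : ℝ}, c < a → c < b → x ∈ Set.uIcc a b → c < x := by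
    intro c a b x ha hb hx
    rw [Set.mem_uIcc] at hx
    rcases hx with h | h
    · linarith [h.1]
    · linarith [h.1]
  -- FTC identities
  have hΦ : ∀ t, 0 < t → (Matrix.of fun i j =>
      ∫ s in (0:ℝ)..t, ((H s)⁻¹ * B s * ((H s)ᵀ)⁻¹) i j) = (H t)⁻¹ * Y t := by
    intro t ht
    ext i j
    have hderiv : ∀ x ∈ Set.uIcc (0:ℝ) t, HasDerivAt (fun r => ((H r)⁻¹ * Y r) i j)
        (((H x)⁻¹ * B x * ((H x)ᵀ)⁻¹) i j) x := fun x hx =>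
      JacobiAux.hasDerivAt_matrix.1 (hGH x (memIoi (by norm_num) (by linarith) hx)) i j
    have hint : IntervalIntegrable (fun s => ((H s)⁻¹ * B s * ((H s)ᵀ)⁻¹) i j) volume 0 t :=
      ((hFc i j).mono fun x hx => memIoi (by norm_num) (by linarith) hx).intervalIntegrable
    have hftc := intervalIntegral.integral_eq_sub_of_hasDerivAt hderiv hint
    simp only [Matrix.of_apply]
    rw [hftc, hY0]
    simp [Matrix.mul_zero]
  have hΨ : ∀ t, 0 < t → (Matrix.of fun i j =>
      ∫ s in (1:ℝ)..t, ((Y s)⁻¹ * B s * ((Y s)ᵀ)⁻¹) i j)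
      = (Y 1)⁻¹ * H 1 - (Y t)⁻¹ * H t := by
    intro t ht
    ext i j
    have hderiv : ∀ x ∈ Set.uIcc (1:ℝ) t, HasDerivAt (fun r => ((Y r)⁻¹ * H r) i j)
        ((-((Y x)⁻¹ * B x * ((Y x)ᵀ)⁻¹)) i j) x := fun x hx =>
      JacobiAux.hasDerivAt_matrix.1 (hYH x (memIoi one_pos ht hx)) i j
    have hint : IntervalIntegrable (fun s => ((-((Y s)⁻¹ * B s * ((Y s)ᵀ)⁻¹)) i j)) volume 1 t := by
      have : IntervalIntegrable (fun s => ((Y s)⁻¹ * B s * ((Y s)ᵀ)⁻¹) i j) volume 1 t :=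
        ((hGc i j).mono fun x hx => memIoi one_pos ht hx).intervalIntegrable
      exact this.neg
    have hftc := intervalIntegral.integral_eq_sub_of_hasDerivAt hderiv hint
    have h2 : ∫ s in (1:ℝ)..t, ((-((Y s)⁻¹ * B s * ((Y s)ᵀ)⁻¹)) i j)
        = - ∫ s in (1:ℝ)..t, ((Y s)⁻¹ * B s * ((Y s)ᵀ)⁻¹) i j := by
      rw [← intervalIntegral.integral_neg]
      simp [Matrix.neg_apply]
    rw [h2] at hftc
    simp only [Matrix.of_apply, Matrix.sub_apply]
    linarith [hftc]
  -- symmetry and positivity of the integrands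
  have hFsymm : ∀ s : ℝ, ((H s)⁻¹ * B s * ((H s)ᵀ)⁻¹)ᵀ = (H s)⁻¹ * B s * ((H s)ᵀ)⁻¹ := by
    intro s
    rw [← Matrix.transpose_nonsing_inv]
    simp [Matrix.transpose_mul, Matrix.transpose_transpose, hBsymm s, Matrix.mul_assoc]
  have hGsymm : ∀ s : ℝ, ((Y s)⁻¹ * B s * ((Y s)ᵀ)⁻¹)ᵀ = (Y s)⁻¹ * B s * ((Y s)ᵀ)⁻¹ := by
    intro s
    rw [← Matrix.transpose_nonsing_inv]
    simp [Matrix.transpose_mul, Matrix.transpose_transpose, hBsymm s, Matrix.mul_assoc]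
  have hFpos : ∀ s : ℝ, (-1:ℝ) < s → ((H s)⁻¹ * B s * ((H s)ᵀ)⁻¹).PosDef :=
    fun s hs => JacobiAux.posdef_conj (hBpos s) (hdetH s hs)
  have hGpos : ∀ s : ℝ, (0:ℝ) < s → ((Y s)⁻¹ * B s * ((Y s)ᵀ)⁻¹).PosDef :=
    fun s hs => JacobiAux.posdef_conj (hBpos s) (hdetY s hs)
  have hΦpos : ∀ t, 0 < t → (Matrix.of fun i j =>
      ∫ s in (0:ℝ)..t, ((H s)⁻¹ * B s * ((H s)ᵀ)⁻¹) i j).PosDef :=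
    fun t ht => JacobiAux.posdef_integral ht (by norm_num) hFc hFsymm hFpos
  -- the basic product identity
  have hmul1 : ∀ t, 0 < t → ((H t)⁻¹ * Y t) * ((Y t)⁻¹ * H t) = 1 := by
    intro t ht
    have hYc : Y t * ((Y t)⁻¹ * H t) = H t := by
      rw [← Matrix.mul_assoc, Matrix.mul_nonsing_inv _ (hdetY t ht).isUnit, Matrix.one_mul]
    rw [Matrix.mul_assoc, hYc, Matrix.nonsing_inv_mul _ (hdetH t (by linarith)).isUnit]
  -- statement 1
  have hstmt1 : ∀ t > (0 : ℝ),
      (Matrix.of fun i j =>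
          ∫ s in (0:ℝ)..t, ((H s)⁻¹ * B s * ((H s)ᵀ)⁻¹) i j) *
        ((Y 1)⁻¹ * H 1 -
          Matrix.of fun i j =>
            ∫ s in (1:ℝ)..t, ((Y s)⁻¹ * B s * ((Y s)ᵀ)⁻¹) i j) = 1 := by
    intro t ht
    rw [hΦ t ht, hΨ t ht, sub_sub_cancel]
    exact hmul1 t ht
  -- statement 2
  have hstmt2 : ∀ s t : ℝ, 0 < s → s < t →
      ((Matrix.of fun i j => ∫ r in (1:ℝ)..t, ((Y r)⁻¹ * B r * ((Y r)ᵀ)⁻¹) i j) -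
        Matrix.of fun i j =>
          ∫ r in (1:ℝ)..s, ((Y r)⁻¹ * B r * ((Y r)ᵀ)⁻¹) i j).PosDef := by
    intro s t hs hst
    have hintb : ∀ b : ℝ, 0 < b → ∀ i j,
        IntervalIntegrable (fun r => ((Y r)⁻¹ * B r * ((Y r)ᵀ)⁻¹) i j) volume 1 b :=
      fun b hb i j => ((hGc i j).mono fun x hx => memIoi one_pos hb hx).intervalIntegrable
    have hdiff : (Matrix.of fun i j => ∫ r in (1:ℝ)..t, ((Y r)⁻¹ * B r * ((Y r)ᵀ)⁻¹) i j) -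
        (Matrix.of fun i j => ∫ r in (1:ℝ)..s, ((Y r)⁻¹ * B r * ((Y r)ᵀ)⁻¹) i j)
        = Matrix.of fun i j => ∫ r in s..t, ((Y r)⁻¹ * B r * ((Y r)ᵀ)⁻¹) i j := by
      ext i j
      simp only [Matrix.sub_apply, Matrix.of_apply]
      exact intervalIntegral.integral_interval_sub_left (hintb t (by linarith) i j) (hintb s hs i j)
    rw [hdiff]
    exact JacobiAux.posdef_integral hst hs hGc hGsymm hGpos
  -- statement 3
  have hstmt3 : ∀ t > (0 : ℝ),
      ((Y 1)⁻¹ * H 1 -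
        Matrix.of fun i j =>
          ∫ s in (1:ℝ)..t, ((Y s)⁻¹ * B s * ((Y s)ᵀ)⁻¹) i j).PosDef := by
    intro t ht
    rw [hΨ t ht, sub_sub_cancel]
    have hinv : (Matrix.of fun i j =>
        ∫ s in (0:ℝ)..t, ((H s)⁻¹ * B s * ((H s)ᵀ)⁻¹) i j)⁻¹ = (Y t)⁻¹ * H t := by
      rw [hΦ t ht]
      exact Matrix.inv_eq_right_inv (hmul1 t ht)
    rw [← hinv]
    exact (hΦpos t ht).inv
  -- statement 4 : convergence
  have hq_le : ∀ (x : Fin n → ℝ) (a b : ℝ), 1 ≤ a → a ≤ b →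
      x ⬝ᵥ ((Matrix.of fun i j => ∫ s in (1:ℝ)..a, ((Y s)⁻¹ * B s * ((Y s)ᵀ)⁻¹) i j) *ᵥ x)
        ≤ x ⬝ᵥ ((Matrix.of fun i j => ∫ s in (1:ℝ)..b, ((Y s)⁻¹ * B s * ((Y s)ᵀ)⁻¹) i j) *ᵥ x) := by
    intro x a b ha hab
    rcases eq_or_lt_of_le hab with rfl | hlt
    · exact le_rfl
    · have h0 := (hstmt2 a b (by linarith) hlt).posSemidef.dotProduct_mulVec_nonneg x
      rw [JacobiAux.star_vec, Matrix.sub_mulVec, dotProduct_sub] at h0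
      linarith
  have hq_bdd : ∀ (x : Fin n → ℝ) (t : ℝ), 0 < t →
      x ⬝ᵥ ((Matrix.of fun i j => ∫ s in (1:ℝ)..t, ((Y s)⁻¹ * B s * ((Y s)ᵀ)⁻¹) i j) *ᵥ x)
        ≤ x ⬝ᵥ (((Y 1)⁻¹ * H 1) *ᵥ x) := by
    intro x t ht
    have h0 := (hstmt3 t ht).posSemidef.dotProduct_mulVec_nonneg x
    rw [JacobiAux.star_vec, Matrix.sub_mulVec, dotProduct_sub] at h0
    linarith
  have hql : ∀ x : Fin n → ℝ, ∃ l : ℝ,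
      Tendsto (fun t => x ⬝ᵥ ((Matrix.of fun i j =>
        ∫ s in (1:ℝ)..t, ((Y s)⁻¹ * B s * ((Y s)ᵀ)⁻¹) i j) *ᵥ x)) atTop (𝓝 l) := by
    intro x
    set f : ℝ → ℝ := fun t => x ⬝ᵥ ((Matrix.of fun i j =>
      ∫ s in (1:ℝ)..(max t 1), ((Y s)⁻¹ * B s * ((Y s)ᵀ)⁻¹) i j) *ᵥ x) with hfdef
    have hmono : Monotone f := fun a b hab =>
      hq_le x _ _ (le_max_right _ _) (max_le_max hab le_rfl)
    have hbdd : BddAbove (Set.range f) := by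
      refine ⟨x ⬝ᵥ (((Y 1)⁻¹ * H 1) *ᵥ x), ?_⟩
      rintro - ⟨t, rfl⟩
      exact hq_bdd x _ (lt_of_lt_of_le one_pos (le_max_right _ _))
    refine ⟨⨆ t, f t, (tendsto_atTop_ciSup hmono hbdd).congr' ?_⟩
    filter_upwards [eventually_ge_atTop 1] with t ht
    simp only [hfdef, max_eq_left ht]
  choose l hl using hql
  refine ⟨hstmt1, hstmt2, hstmt3, ⟨Matrix.of fun i j =>
    (l (Pi.single i 1 + Pi.single j 1) - l (Pi.single i 1) - l (Pi.single j 1)) / 2, ?_⟩⟩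
  intro i j
  have hsingle : ∀ (M : Matrix (Fin n) (Fin n) ℝ) (i j : Fin n),
      (Pi.single i 1 : Fin n → ℝ) ⬝ᵥ (M *ᵥ Pi.single j 1) = M i j := by
    intro M i j
    simp [dotProduct, Matrix.mulVec, Pi.single_apply, mul_ite, ite_mul,
      Finset.sum_ite_eq]
  have hψsymm : ∀ t : ℝ, (∫ s in (1:ℝ)..t, ((Y s)⁻¹ * B s * ((Y s)ᵀ)⁻¹) j i)
      = ∫ s in (1:ℝ)..t, ((Y s)⁻¹ * B s * ((Y s)ᵀ)⁻¹) i j := by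
    intro t
    apply intervalIntegral.integral_congr
    intro s _
    show ((Y s)⁻¹ * B s * ((Y s)ᵀ)⁻¹) j i = ((Y s)⁻¹ * B s * ((Y s)ᵀ)⁻¹) i j
    conv_lhs => rw [← hGsymm s]
    rw [Matrix.transpose_apply]
  have hkey : ∀ t : ℝ, (∫ s in (1:ℝ)..t, ((Y s)⁻¹ * B s * ((Y s)ᵀ)⁻¹) i j) =
      ((Pi.single i 1 + Pi.single j 1 : Fin n → ℝ) ⬝ᵥ ((Matrix.of fun i j =>
          ∫ s in (1:ℝ)..t, ((Y s)⁻¹ * B s * ((Y s)ᵀ)⁻¹) i j) *ᵥ (Pi.single i 1 + Pi.single j 1))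
        - (Pi.single i 1 : Fin n → ℝ) ⬝ᵥ ((Matrix.of fun i j =>
          ∫ s in (1:ℝ)..t, ((Y s)⁻¹ * B s * ((Y s)ᵀ)⁻¹) i j) *ᵥ (Pi.single i 1))
        - (Pi.single j 1 : Fin n → ℝ) ⬝ᵥ ((Matrix.of fun i j =>
          ∫ s in (1:ℝ)..t, ((Y s)⁻¹ * B s * ((Y s)ᵀ)⁻¹) i j) *ᵥ (Pi.single j 1))) / 2 := by
    intro t
    simp only [Matrix.mulVec_add, dotProduct_add, add_dotProduct, hsingle]
    simp only [Matrix.of_apply]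
    rw [hψsymm t]
    ring
  have hT := (((hl (Pi.single i 1 + Pi.single j 1)).sub (hl (Pi.single i 1))).sub
    (hl (Pi.single j 1))).div_const (2:ℝ)
  simp only [Matrix.of_apply]
  exact Tendsto.congr (fun t => (hkey t).symm) hT
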